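/- Let μ_b = ⊗_{(k,n)} μ_{b_{kn}} be an infinite product of centered one-dimensional Gaussian measures μ_{b_{kn}} with densities √(b_{kn}/π)·exp(−b_{kn}x²) on coordinates indexed by pairs (k,n) with k<n, and let a = (a_{kn}) be positive weights. Then μ_b assigns full measure to the weighted ℓ² ball {x : Σ_{(k,n)} a_{kn} x_{kn}² < ∞} if and only if Σ_{(k,n)} a_{kn}/b_{kn} < ∞. -/

import Mathlib

open MeasureTheory ProbabilityTheory Real
open scoped ENNReal NNReal
set_option maxHeartbeats 1000000

lemma my_gaussian_lintegral_exp {v c : ℝ} (hv : 0 < v) (hd : 0 < 1 - 2 * v * c) :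
    ∫⁻ y, ENNReal.ofReal (Real.exp (c * y ^ 2)) ∂(gaussianReal 0 (Real.toNNReal v))
      = ENNReal.ofReal ((Real.sqrt (1 - 2 * v * c))⁻¹) := by
  have hV : Real.toNNReal v ≠ 0 := by
    simp [Real.toNNReal_eq_zero, not_le, hv]
  have hcoe : ((Real.toNNReal v) : ℝ) = v := Real.coe_toNNReal _ hv.le
  set d : ℝ := 1 / (2 * v) - c with hd_def
  have hd2 : 0 < d := by
    rw [hd_def]
    have h2v : 0 < 2 * v := by linarith
    rw [sub_pos, lt_div_iff₀ h2v]
    nlinarith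
  have hpdf : ∀ y : ℝ, gaussianPDFReal 0 (Real.toNNReal v) y * Real.exp (c * y ^ 2)
      = (Real.sqrt (2 * π * v))⁻¹ * Real.exp (-d * y ^ 2) := by
    intro y
    rw [gaussianPDFReal, hcoe, mul_assoc, ← Real.exp_add]
    congr 1
    have h2v : (2 : ℝ) * v ≠ 0 := by positivity
    rw [hd_def, sub_zero]
    ring
  have hmg : Measurable fun y : ℝ => ENNReal.ofReal (Real.exp (c * y ^ 2)) := by
    measurability
  rw [gaussianReal_of_var_ne_zero _ hV,
    lintegral_withDensity_eq_lintegral_mul _ (measurable_gaussianPDF _ _) hmg]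
  have : ∀ y : ℝ, (gaussianPDF 0 (Real.toNNReal v) * fun y => ENNReal.ofReal (Real.exp (c * y ^ 2))) y
      = ENNReal.ofReal ((Real.sqrt (2 * π * v))⁻¹ * Real.exp (-d * y ^ 2)) := by
    intro y
    simp only [Pi.mul_apply, gaussianPDF]
    rw [← ENNReal.ofReal_mul (gaussianPDFReal_nonneg _ _ _), hpdf y]
  simp_rw [this]
  rw [← ofReal_integral_eq_lintegral_ofReal]
  · rw [MeasureTheory.integral_const_mul, integral_gaussian]
    congr 1
    have hq : π / d = (2 * π * v) / (1 - 2 * v * c) := by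
      rw [hd_def]; field_simp
    have h2pv : (0:ℝ) < Real.sqrt (2 * π * v) := Real.sqrt_pos.mpr (by positivity)
    rw [hq, Real.sqrt_div (by positivity : (0:ℝ) ≤ 2 * π * v)]
    field_simp
  · exact (integrable_exp_neg_mul_sq hd2).const_mul _
  · exact Filter.Eventually.of_forall fun y => by positivity

lemma my_gaussian_integral_exp {v c : ℝ} (hv : 0 < v) (hd : 0 < 1 - 2 * v * c) :
    ∫ y, Real.exp (c * y ^ 2) ∂(gaussianReal 0 (Real.toNNReal v))
      = (Real.sqrt (1 - 2 * v * c))⁻¹ := by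
  have hm : Measurable fun y : ℝ => Real.exp (c * y ^ 2) := by measurability
  rw [MeasureTheory.integral_eq_lintegral_of_nonneg_ae
      (Filter.Eventually.of_forall fun y => (Real.exp_pos _).le) hm.aestronglyMeasurable,
    my_gaussian_lintegral_exp hv hd, ENNReal.toReal_ofReal (by positivity)]

lemma my_integrable_of_bounded {Ω : Type*} [MeasurableSpace Ω] {μ : Measure Ω}
    [IsProbabilityMeasure μ] {g : Ω → ℝ} (hg : Measurable g)
    (hb : ∀ ω, g ω ∈ Set.Icc (0:ℝ) 1) : Integrable g μ := by
  refine Integrable.mono' (integrable_const 1) hg.aestronglyMeasurable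
    (Filter.Eventually.of_forall fun ω => ?_)
  rw [Real.norm_eq_abs, abs_of_nonneg (hb ω).1]
  exact (hb ω).2

lemma my_integral_prod {Ω : Type*} [MeasurableSpace Ω] (μ : Measure Ω) [IsProbabilityMeasure μ]
    {ι : Type*} (f : ι → Ω → ℝ)
    (hindep : iIndepFun f μ)
    (hm : ∀ i, Measurable (f i)) (hbd : ∀ i ω, f i ω ∈ Set.Icc (0:ℝ) 1) (s : Finset ι) :
    ∫ ω, ∏ i ∈ s, f i ω ∂μ = ∏ i ∈ s, ∫ ω, f i ω ∂μ := by
  classical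
  have hpm : ∀ t : Finset ι, Measurable fun ω => ∏ i ∈ t, f i ω := fun t =>
    Finset.measurable_prod _ fun i _ => hm i
  have hpb : ∀ (t : Finset ι) ω, (∏ i ∈ t, f i ω) ∈ Set.Icc (0:ℝ) 1 := fun t ω =>
    ⟨Finset.prod_nonneg fun i _ => (hbd i ω).1,
      Finset.prod_le_one (fun i _ => (hbd i ω).1) fun i _ => (hbd i ω).2⟩
  have hpi : ∀ t : Finset ι, Integrable (fun ω => ∏ i ∈ t, f i ω) μ := fun t =>
    my_integrable_of_bounded (hpm t) (hpb t)
  induction s using Finset.induction_on with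
  | empty => simp
  | @insert i s hi ih =>
    have hfun : ∀ t : Finset ι, (∏ j ∈ t, f j) = fun ω => ∏ j ∈ t, f j ω := fun t => by
      funext ω; simp
    have hIndep2 : IndepFun (f i) (∏ j ∈ s, f j) μ :=
      (hindep.indepFun_finsetProd_of_notMem hm hi).symm
    have hkey := hIndep2.integral_mul_eq_mul_integral
      (my_integrable_of_bounded (hm i) (hbd i)).1
      (by rw [hfun]; exact (hpi s).1)
    simp only [Finset.prod_insert hi]
    have h1 : ∫ ω, f i ω * ∏ j ∈ s, f j ω ∂μ
        = (∫ ω, f i ω ∂μ) * ∫ ω, ∏ j ∈ s, f j ω ∂μ := by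
      rw [hfun] at hkey; exact hkey
    rw [h1, ih]

lemma my_one_add_sum_le_prod {ι : Type*} (s : Finset ι) (r : ι → ℝ) (hr : ∀ i, 0 ≤ r i) :
    1 + ∑ i ∈ s, r i ≤ ∏ i ∈ s, (1 + r i) := by
  classical
  induction s using Finset.induction_on with
  | empty => simp
  | @insert i s hi ih =>
    rw [Finset.sum_insert hi, Finset.prod_insert hi]
    have h1 : 0 ≤ ∑ j ∈ s, r j := Finset.sum_nonneg fun j _ => hr j
    nlinarith [hr i, ih]

lemma my_summable_iff {ι : Type*} {f : ι → ℝ} (hf : ∀ i, 0 ≤ f i) :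
    Summable f ↔ ∑' i, ENNReal.ofReal (f i) ≠ ⊤ := by
  constructor
  · intro h
    rw [← ENNReal.ofReal_tsum_of_nonneg hf h]
    exact ENNReal.ofReal_ne_top
  · intro h
    exact (ENNReal.summable_toReal h).congr fun i => ENNReal.toReal_ofReal (hf i)

lemma my_field {w : ℝ} (hw : w ≠ 0) (u : ℝ) : 1 - 2 * (1 / (2 * w)) * u = 1 - u / w := by
  have h : 2 * (1 / (2 * w)) = 1 / w := by
    rw [mul_one_div, ← div_div, div_self (two_ne_zero : (2:ℝ) ≠ 0)]
  rw [h, one_div, inv_mul_eq_div]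


/-- Kolmogorov zero–one law for Gaussian weighted ℓ² balls: for independent centered
Gaussian coordinates `x_{kn}` with densities `√(b_{kn}/π)·e^{−b_{kn}x²}` (i.e., variance
`1/(2b_{kn})`), indexed by pairs `(k,n)` with `k < n`, the weighted ℓ² ball
`{x : Σ a_{kn} x_{kn}² < ∞}` has full measure if and only if `Σ a_{kn}/b_{kn} < ∞`. -/
theorem gaussian_weighted_l2_full_measure_iff
    {Ω : Type*} [MeasurableSpace Ω] (μ : Measure Ω) [IsProbabilityMeasure μ]
    (a b : {p : ℤ × ℤ // p.1 < p.2} → ℝ)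
    (ha : ∀ i, 0 < a i) (hb : ∀ i, 0 < b i)
    (x : {p : ℤ × ℤ // p.1 < p.2} → Ω → ℝ)
    (hmeas : ∀ i, Measurable (x i))
    (hindep : iIndepFun x μ)
    (hgauss : ∀ i, Measure.map (x i) μ = gaussianReal 0 (Real.toNNReal (1 / (2 * b i)))) :
    μ {ω | Summable (fun i => a i * (x i ω) ^ 2)} = 1 ↔ Summable (fun i => a i / b i) := by
  have hv : ∀ i, (0:ℝ) < 1 / (2 * b i) := fun i => by have := hb i; positivity
  have hterm_nonneg : ∀ i ω, 0 ≤ a i * x i ω ^ 2 := fun i ω => mul_nonneg (ha i).le (sq_nonneg _)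
  have htm : ∀ i, Measurable fun ω => ENNReal.ofReal (a i * x i ω ^ 2) := fun i =>
    (((hmeas i).pow_const 2).const_mul _).ennreal_ofReal
  set T : Ω → ℝ≥0∞ := fun ω => ∑' i, ENNReal.ofReal (a i * x i ω ^ 2) with hT_def
  have hTmeas : Measurable T := Measurable.ennreal_tsum htm
  have hset : {ω | Summable (fun i => a i * (x i ω) ^ 2)} = {ω | T ω ≠ ⊤} := by
    ext ω
    simp only [Set.mem_setOf_eq, hT_def]
    exact my_summable_iff fun i => hterm_nonneg i ω
  have hms : MeasurableSet {ω | T ω ≠ ⊤} := by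
    have : {ω | T ω ≠ ⊤} = (T ⁻¹' {⊤})ᶜ := rfl
    rw [this]
    exact (hTmeas (measurableSet_singleton ⊤)).compl
  rw [hset]
  constructor
  · -- hard direction
    intro h1
    by_contra hns
    have hae : ∀ᵐ ω ∂μ, T ω ≠ ⊤ := by
      rw [← prob_compl_eq_zero_iff hms] at h1
      rw [ae_iff]
      simpa [Set.compl_setOf] using h1
    have hval : ∀ i, 1 - 2 * (1 / (2 * b i)) * (-(a i)) = 1 + a i / b i := fun i => by
      rw [my_field (hb i).ne', neg_div, sub_neg_eq_add]
    have harg : ∀ i, 0 < 1 - 2 * (1 / (2 * b i)) * (-(a i)) := fun i => by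
      rw [hval i]
      have := div_pos (ha i) (hb i)
      linarith
    have hfm : ∀ i, Measurable fun ω => Real.exp (-(a i) * x i ω ^ 2) := fun i =>
      Real.measurable_exp.comp (((hmeas i).pow_const 2).const_mul _)
    have hfbd : ∀ i ω, Real.exp (-(a i) * x i ω ^ 2) ∈ Set.Icc (0:ℝ) 1 := fun i ω =>
      ⟨(Real.exp_pos _).le, Real.exp_le_one_iff.mpr (by nlinarith [sq_nonneg (x i ω), ha i])⟩
    have hEi : ∀ i, ∫ ω, Real.exp (-(a i) * x i ω ^ 2) ∂μ = (Real.sqrt (1 + a i / b i))⁻¹ := by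
      intro i
      have hmg : Measurable fun y : ℝ => Real.exp (-(a i) * y ^ 2) :=
        Real.measurable_exp.comp ((measurable_id.pow_const 2).const_mul _)
      have h0 := integral_map (μ := μ) (φ := x i) (hmeas i).aemeasurable
        (f := fun y => Real.exp (-(a i) * y ^ 2)) hmg.aestronglyMeasurable
      rw [← h0, hgauss i, my_gaussian_integral_exp (hv i) (harg i), hval i]
    have hTrm : Measurable fun ω => (T ω).toReal := hTmeas.ennreal_toReal
    have hgmeas : Measurable fun ω => Real.exp (-(T ω).toReal) :=
      Real.measurable_exp.comp hTrm.neg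
    have hgbd : ∀ ω, Real.exp (-(T ω).toReal) ∈ Set.Icc (0:ℝ) 1 := fun ω =>
      ⟨(Real.exp_pos _).le, Real.exp_le_one_iff.mpr (neg_nonpos.mpr ENNReal.toReal_nonneg)⟩
    have hgint : Integrable (fun ω => Real.exp (-(T ω).toReal)) μ :=
      my_integrable_of_bounded hgmeas hgbd
    have hgpos : 0 < ∫ ω, Real.exp (-(T ω).toReal) ∂μ := by
      rw [integral_pos_iff_support_of_nonneg (fun ω => (Real.exp_pos _).le) hgint]
      have hsupp : (Function.support fun ω => Real.exp (-(T ω).toReal)) = Set.univ :=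
        Set.eq_univ_of_forall fun ω => (Real.exp_pos _).ne'
      rw [hsupp, measure_univ]
      exact zero_lt_one
    have hr_nonneg : ∀ i, (0:ℝ) ≤ a i / b i := fun i => (div_pos (ha i) (hb i)).le
    have hkey : ∀ s : Finset {p : ℤ × ℤ // p.1 < p.2},
        ∑ i ∈ s, a i / b i ≤ ((∫ ω, Real.exp (-(T ω).toReal) ∂μ) ^ 2)⁻¹ := by
      intro s
      have hprodint : Integrable (fun ω => ∏ i ∈ s, Real.exp (-(a i) * x i ω ^ 2)) μ :=
        my_integrable_of_bounded (Finset.measurable_prod _ fun i _ => hfm i) fun ω =>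
          ⟨Finset.prod_nonneg fun i _ => (hfbd i ω).1,
            Finset.prod_le_one (fun i _ => (hfbd i ω).1) fun i _ => (hfbd i ω).2⟩
      have hmono : ∫ ω, Real.exp (-(T ω).toReal) ∂μ
          ≤ ∫ ω, ∏ i ∈ s, Real.exp (-(a i) * x i ω ^ 2) ∂μ := by
        apply integral_mono_ae hgint hprodint
        filter_upwards [hae] with ω hω
        have h2 : (∑ i ∈ s, ENNReal.ofReal (a i * x i ω ^ 2)) ≤ T ω := ENNReal.sum_le_tsum s
        have h3 := ENNReal.toReal_mono hω h2
        rw [ENNReal.toReal_sum fun i _ => ENNReal.ofReal_ne_top] at h3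
        have h4 : ∑ i ∈ s, a i * x i ω ^ 2 ≤ (T ω).toReal := by
          calc ∑ i ∈ s, a i * x i ω ^ 2
              = ∑ i ∈ s, (ENNReal.ofReal (a i * x i ω ^ 2)).toReal :=
                Finset.sum_congr rfl fun i _ => (ENNReal.toReal_ofReal (hterm_nonneg i ω)).symm
            _ ≤ (T ω).toReal := h3
        calc Real.exp (-(T ω).toReal) ≤ Real.exp (-(∑ i ∈ s, a i * x i ω ^ 2)) :=
              Real.exp_le_exp.mpr (by linarith)
          _ = ∏ i ∈ s, Real.exp (-(a i) * x i ω ^ 2) := by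
              rw [← Real.exp_sum]
              congr 1
              rw [← Finset.sum_neg_distrib]
              exact Finset.sum_congr rfl fun i _ => by ring
      have hprodval : ∫ ω, ∏ i ∈ s, Real.exp (-(a i) * x i ω ^ 2) ∂μ
          = ∏ i ∈ s, (Real.sqrt (1 + a i / b i))⁻¹ := by
        have hind2 : iIndepFun
            (fun i => fun ω => Real.exp (-(a i) * x i ω ^ 2)) μ :=
          hindep.comp (fun i y => Real.exp (-(a i) * y ^ 2)) fun i =>
            Real.measurable_exp.comp ((measurable_id.pow_const 2).const_mul _)
        rw [my_integral_prod μ _ hind2 hfm hfbd s]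
        exact Finset.prod_congr rfl fun i _ => hEi i
      have hsq : (∫ ω, Real.exp (-(T ω).toReal) ∂μ) ^ 2 ≤ (∏ i ∈ s, (1 + a i / b i))⁻¹ := by
        have h4 : ∫ ω, Real.exp (-(T ω).toReal) ∂μ ≤ ∏ i ∈ s, (Real.sqrt (1 + a i / b i))⁻¹ := by
          rw [← hprodval]; exact hmono
        calc (∫ ω, Real.exp (-(T ω).toReal) ∂μ) ^ 2
            ≤ (∏ i ∈ s, (Real.sqrt (1 + a i / b i))⁻¹) ^ 2 := pow_le_pow_left₀ hgpos.le h4 2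
          _ = ∏ i ∈ s, ((Real.sqrt (1 + a i / b i))⁻¹) ^ 2 := by rw [Finset.prod_pow]
          _ = ∏ i ∈ s, (1 + a i / b i)⁻¹ := Finset.prod_congr rfl fun i _ => by
              rw [inv_pow, Real.sq_sqrt (by linarith [hr_nonneg i])]
          _ = (∏ i ∈ s, (1 + a i / b i))⁻¹ := Finset.prod_inv_distrib _
      have hP : 1 + ∑ i ∈ s, a i / b i ≤ ∏ i ∈ s, (1 + a i / b i) :=
        my_one_add_sum_le_prod s _ hr_nonneg
      have hsum_nn : 0 ≤ ∑ i ∈ s, a i / b i := Finset.sum_nonneg fun i _ => hr_nonneg i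
      have h5 : (∫ ω, Real.exp (-(T ω).toReal) ∂μ) ^ 2 ≤ (1 + ∑ i ∈ s, a i / b i)⁻¹ :=
        hsq.trans (inv_anti₀ (by linarith) hP)
      have h6 := inv_anti₀ (pow_pos hgpos 2) h5
      rw [inv_inv] at h6
      linarith
    exact hns (summable_of_sum_le (fun i => hr_nonneg i) hkey)
  · -- easy direction
    intro hsum
    have hbound : ∀ i, ∫⁻ ω, ENNReal.ofReal (a i * x i ω ^ 2) ∂μ
        ≤ ENNReal.ofReal (2 * (a i / b i)) * ENNReal.ofReal ((Real.sqrt (1/2 : ℝ))⁻¹) := by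
      intro i
      have hfm : Measurable fun y : ℝ => ENNReal.ofReal (a i * y ^ 2) :=
        ((measurable_id.pow_const 2).const_mul _).ennreal_ofReal
      have hmap : ∫⁻ ω, ENNReal.ofReal (a i * x i ω ^ 2) ∂μ
          = ∫⁻ y, ENNReal.ofReal (a i * y ^ 2) ∂(Measure.map (x i) μ) :=
        (lintegral_map hfm (hmeas i)).symm
      rw [hmap, hgauss i]
      have hpt : ∀ y : ℝ, a i * y ^ 2 ≤ (2 * (a i / b i)) * Real.exp ((b i / 2) * y ^ 2) := by
        intro y
        have hs : (b i / 2) * y ^ 2 ≤ Real.exp ((b i / 2) * y ^ 2) := by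
          have := Real.add_one_le_exp ((b i / 2) * y ^ 2)
          linarith
        have heq : a i * y ^ 2 = (2 * (a i / b i)) * ((b i / 2) * y ^ 2) := by
          field_simp
          linear_combination (-(a i * y ^ 2)) * mul_inv_cancel₀ (hb i).ne'
        rw [heq]
        exact mul_le_mul_of_nonneg_left hs
          (mul_nonneg (by norm_num) (div_nonneg (ha i).le (hb i).le))
      have hexm : Measurable fun y : ℝ => ENNReal.ofReal (Real.exp ((b i / 2) * y ^ 2)) := by
        measurability
      calc ∫⁻ y, ENNReal.ofReal (a i * y ^ 2) ∂(gaussianReal 0 (Real.toNNReal (1 / (2 * b i))))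
          ≤ ∫⁻ y, ENNReal.ofReal ((2 * (a i / b i)) * Real.exp ((b i / 2) * y ^ 2))
            ∂(gaussianReal 0 (Real.toNNReal (1 / (2 * b i)))) :=
            lintegral_mono fun y => ENNReal.ofReal_le_ofReal (hpt y)
        _ = ENNReal.ofReal (2 * (a i / b i))
            * ∫⁻ y, ENNReal.ofReal (Real.exp ((b i / 2) * y ^ 2))
              ∂(gaussianReal 0 (Real.toNNReal (1 / (2 * b i)))) := by
            simp_rw [ENNReal.ofReal_mul
              (mul_nonneg (by norm_num) (div_nonneg (ha i).le (hb i).le) : (0:ℝ) ≤ 2 * (a i / b i))]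
            rw [lintegral_const_mul _ hexm]
        _ = ENNReal.ofReal (2 * (a i / b i)) * ENNReal.ofReal ((Real.sqrt (1/2 : ℝ))⁻¹) := by
            have hhalf : 1 - 2 * (1 / (2 * b i)) * (b i / 2) = 1/2 := by
              rw [mul_comm (2:ℝ) (1 / (2 * b i)), mul_assoc, one_div, inv_mul_eq_div,
                show (2:ℝ) * (b i / 2) = b i from by ring,
                mul_comm (2:ℝ) (b i), ← div_div, div_self (hb i).ne']
              norm_num
            rw [my_gaussian_lintegral_exp (hv i) (by rw [hhalf]; norm_num), hhalf]
    have hfin : ∫⁻ ω, T ω ∂μ < ⊤ := by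
      rw [hT_def]
      rw [lintegral_tsum fun i => (htm i).aemeasurable]
      calc ∑' i, ∫⁻ ω, ENNReal.ofReal (a i * x i ω ^ 2) ∂μ
          ≤ ∑' i, ENNReal.ofReal (2 * (a i / b i)) * ENNReal.ofReal ((Real.sqrt (1/2 : ℝ))⁻¹) :=
            ENNReal.tsum_le_tsum hbound
        _ = (∑' i, ENNReal.ofReal (2 * (a i / b i))) * ENNReal.ofReal ((Real.sqrt (1/2 : ℝ))⁻¹) :=
            ENNReal.tsum_mul_right
        _ = ENNReal.ofReal (∑' i, 2 * (a i / b i)) * ENNReal.ofReal ((Real.sqrt (1/2 : ℝ))⁻¹) := by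
            rw [ENNReal.ofReal_tsum_of_nonneg
              (fun i => mul_nonneg (by norm_num) (div_nonneg (ha i).le (hb i).le)) (hsum.mul_left 2)]
        _ < ⊤ := ENNReal.mul_lt_top ENNReal.ofReal_lt_top ENNReal.ofReal_lt_top
    have hae : ∀ᵐ ω ∂μ, T ω ≠ ⊤ := by
      filter_upwards [ae_lt_top hTmeas hfin.ne] with ω h using h.ne
    rw [← prob_compl_eq_zero_iff hms]
    rw [ae_iff] at hae
    simpa [Set.compl_setOf] using hae
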